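/- Let v_{k-1} be an inductive valuation of K[x] with key polynomial φ_k for the augmentation v_k = [v_{k-1}; v_k(φ_k) = μ_k], and let a ∈ K[x] be a polynomial that is not equivalence divisible by φ_k in v_{k-1}. Write a = α + β φ_k with deg α < deg φ_k. Then v_{k-1}(a) = v_{k-1}(α) and a ∼_{v_k} α. -/

import Mathlib

open Polynomial

variable {K : Type*} [Field K] {Γ : Type*} [AddCommGroup Γ] [LinearOrder Γ] [IsOrderedAddMonoid Γ]

/-- `g ∼_w h` : equivalence in the (pseudo-)valuation `w` (MacLane). -/
def EquivV {R : Type*} [CommRing R] (w : AddValuation R (WithTop Γ)) (g h : R) : Prop :=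
  min (w g) (w h) < w (g - h) ∨ (w g = ⊤ ∧ w h = ⊤)

/-- `φ` equivalence-divides `g` in `w`. -/
def EqDvd {R : Type*} [CommRing R] (w : AddValuation R (WithTop Γ)) (φ g : R) : Prop :=
  ∃ a : R, EquivV w g (a * φ)

/-- `φ` is equivalence irreducible in `w`. -/
def EqIrred {R : Type*} [CommRing R] (w : AddValuation R (WithTop Γ)) (φ : R) : Prop :=
  ∀ a b : R, EqDvd w φ (a * b) → EqDvd w φ a ∨ EqDvd w φ b

/-- `φ` is minimal in `w`. -/
def MinimalV (w : AddValuation (Polynomial K) (WithTop Γ)) (φ : Polynomial K) : Prop :=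
  ∀ g : Polynomial K, g ≠ 0 → EqDvd w φ g → φ.degree ≤ g.degree

/-- `φ` is a key polynomial over `w`. -/
def KeyOver (w : AddValuation (Polynomial K) (WithTop Γ)) (φ : Polynomial K) : Prop :=
  φ.Monic ∧ 0 < φ.degree ∧ EqIrred w φ ∧ MinimalV w φ

/-- `w = [u; w φ = μ]` is the augmented (inductive) valuation of MacLane: on the `φ`-adic
expansion `g = Σ cᵢ φ^i` (with `deg cᵢ < deg φ`) one has `w g = min ᵢ (u cᵢ + i μ)`. -/
def IsAugmentation (u w : AddValuation (Polynomial K) (WithTop Γ)) (φ : Polynomial K)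
    (μ : WithTop Γ) : Prop :=
  w φ = μ ∧
  ∀ (g : Polynomial K) (n : ℕ) (c : ℕ → Polynomial K),
    (∀ i, (c i).degree < φ.degree) → g = ∑ i ∈ Finset.range n, c i * φ ^ i →
    w g = (Finset.range n).inf fun i => u (c i) + i • μ

/-- The coefficients of the `φ`-adic expansion: `phiCoeff φ i g` is the coefficient of `φ^i`. -/
noncomputable def phiCoeff (φ : Polynomial K) : ℕ → Polynomial K → Polynomial K
  | 0, g => g %ₘ φ
  | (i+1), g => phiCoeff φ i (g /ₘ φ)

/-- The self-computation (inductiveness) property: `w` computes values of `φ`-adic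
expansions as the min of the values of the terms. -/
def ExpansionInf (w : AddValuation (Polynomial K) (WithTop Γ)) (φ : Polynomial K) : Prop :=
  ∀ (g : Polynomial K) (n : ℕ) (c : ℕ → Polynomial K),
    (∀ i, (c i).degree < φ.degree) → g = ∑ i ∈ Finset.range n, c i * φ ^ i →
    w g = (Finset.range n).inf fun i => w (c i * φ ^ i)

/-- Effective degree `D_φ(g)` with respect to `w`. -/
noncomputable def effDeg (w : AddValuation (Polynomial K) (WithTop Γ)) (φ g : Polynomial K) : ℕ :=
  sSup {i : ℕ | w g = w (phiCoeff φ i g * φ ^ i)}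

section Aux

variable {K : Type*} [Field K] {Γ : Type*} [AddCommGroup Γ] [LinearOrder Γ] [IsOrderedAddMonoid Γ]

lemma phiCoeff_degree_lt (φ : Polynomial K) (hm : φ.Monic) :
    ∀ (i : ℕ) (g : Polynomial K), (phiCoeff φ i g).degree < φ.degree := by
  intro i
  induction i with
  | zero => intro g; exact Polynomial.degree_modByMonic_lt g hm
  | succ j ih => intro g; exact ih (g /ₘ φ)

lemma phiCoeff_zero_poly (φ : Polynomial K) : ∀ i : ℕ, phiCoeff φ i (0 : Polynomial K) = 0 := by
  intro i
  induction i with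
  | zero => simp [phiCoeff]
  | succ j ih => simp [phiCoeff, Polynomial.zero_divByMonic, ih]

lemma phiCoeff_expand (φ : Polynomial K) (hm : φ.Monic) (hd : 0 < φ.degree) :
    ∀ (n : ℕ) (g : Polynomial K), g.natDegree < n →
      g = ∑ i ∈ Finset.range n, phiCoeff φ i g * φ ^ i := by
  intro n
  induction n with
  | zero => intro g hg; exact absurd hg (Nat.not_lt_zero _)
  | succ n ih =>
    intro g hg
    have hkey : g %ₘ φ + φ * (g /ₘ φ) = g := Polynomial.modByMonic_add_div g (q := φ)
    by_cases h : g.degree < φ.degree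
    · have hq : g /ₘ φ = 0 := (Polynomial.divByMonic_eq_zero_iff hm).2 h
      have hsum : ∑ i ∈ Finset.range (n + 1), phiCoeff φ i g * φ ^ i
          = (∑ i ∈ Finset.range n, phiCoeff φ (i + 1) g * φ ^ (i + 1)) + phiCoeff φ 0 g * φ ^ 0 :=
        Finset.sum_range_succ' _ n
      have hzero : ∀ i : ℕ, phiCoeff φ (i + 1) g = 0 := by
        intro i
        show phiCoeff φ i (g /ₘ φ) = 0
        rw [hq, phiCoeff_zero_poly]
      rw [hsum]
      simp only [hzero, zero_mul, Finset.sum_const_zero, zero_add, pow_zero, mul_one]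
      show g = g %ₘ φ
      exact ((Polynomial.modByMonic_eq_self_iff hm).2 h).symm
    · push_neg at h
      have hφ1 : 0 < φ.natDegree := Polynomial.natDegree_pos_iff_degree_pos.mpr hd
      have hg0 : g ≠ 0 := by
        intro h0
        rw [h0, Polynomial.degree_zero] at h
        exact absurd (lt_of_lt_of_le hd h) (by simp)
      have hgd : 0 < g.natDegree ∨ g.natDegree = 0 := by omega
      have hdiv : (g /ₘ φ).natDegree < n := by
        rw [Polynomial.natDegree_divByMonic g hm]
        have : φ.natDegree ≤ g.natDegree := Polynomial.natDegree_le_natDegree h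
        omega
      have ihq := ih (g /ₘ φ) hdiv
      have hsum : ∑ i ∈ Finset.range (n + 1), phiCoeff φ i g * φ ^ i
          = (∑ i ∈ Finset.range n, phiCoeff φ (i + 1) g * φ ^ (i + 1)) + phiCoeff φ 0 g * φ ^ 0 :=
        Finset.sum_range_succ' _ n
      rw [hsum]
      have : ∑ i ∈ Finset.range n, phiCoeff φ (i + 1) g * φ ^ (i + 1)
          = φ * ∑ i ∈ Finset.range n, phiCoeff φ i (g /ₘ φ) * φ ^ i := by
        rw [Finset.mul_sum]
        refine Finset.sum_congr rfl fun i _ => ?_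
        show phiCoeff φ i (g /ₘ φ) * φ ^ (i + 1) = φ * (phiCoeff φ i (g /ₘ φ) * φ ^ i)
        ring
      rw [this, ← ihq]
      show g = φ * (g /ₘ φ) + phiCoeff φ 0 g * φ ^ 0
      simp only [pow_zero, mul_one]
      show g = φ * (g /ₘ φ) + g %ₘ φ
      rw [add_comm]
      exact hkey.symm

lemma nsmul_lt_nsmul_of_ne_top {Γ : Type*} [AddCommGroup Γ] [LinearOrder Γ] [IsOrderedAddMonoid Γ]
    {x y : WithTop Γ} (hx : x ≠ ⊤) (h : x < y) {i : ℕ} (hi : i ≠ 0) : i • x < i • y := by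
  lift x to Γ using hx
  have hcx : (i • (x : WithTop Γ)) = ((i • x : Γ) : WithTop Γ) := by
    exact_mod_cast rfl
  cases y with
  | top =>
    have htop : i • (⊤ : WithTop Γ) = ⊤ := by
      obtain ⟨j, rfl⟩ := Nat.exists_eq_succ_of_ne_zero hi
      rw [succ_nsmul, add_top]
    rw [hcx, htop]
    exact WithTop.coe_lt_top _
  | coe b =>
    have hb : x < b := by exact_mod_cast h
    have : i • x < i • b := nsmul_lt_nsmul_right hi hb
    rw [hcx, show (i • (b : WithTop Γ)) = ((i • b : Γ) : WithTop Γ) from by exact_mod_cast rfl]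
    exact_mod_cast this

end Aux

/-- **Lemma 4.3 of [M], Lemma 1.1 of [V].**  Let `w = [u; w φ = μ]` be the
augmentation of the inductive valuation `u` by a key polynomial `φ` over `u` with
`μ > u φ`, and let `a ∈ K[x]` be not equivalence divisible by `φ` in `u`.  Write
`a = α + β φ` with `deg α < deg φ`.  Then `u a = u α` and `a ∼_w α`. -/
theorem stmt_16 {K : Type*} [Field K] {Γ : Type*} [AddCommGroup Γ] [LinearOrder Γ] [IsOrderedAddMonoid Γ]
    (u w : AddValuation (Polynomial K) (WithTop Γ)) (φ : Polynomial K) (μ : WithTop Γ)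
    (hkey : KeyOver u φ) (hμ : u φ < μ)
    (haug : IsAugmentation u w φ μ) (hself : ExpansionInf u φ)
    (a α β : Polynomial K) (hα : α.degree < φ.degree) (hab : a = α + β * φ)
    (hnd : ¬ EqDvd u φ a) :
    u a = u α ∧ EquivV w a α := by
  obtain ⟨hmonic, hdeg, _, _⟩ := hkey
  set n : ℕ := a.natDegree + 1 with hn
  set c : ℕ → Polynomial K := fun i => phiCoeff φ i a with hc_def
  have hc : ∀ i, (c i).degree < φ.degree := fun i => phiCoeff_degree_lt φ hmonic i a
  have hrep : a = ∑ i ∈ Finset.range n, c i * φ ^ i :=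
    phiCoeff_expand φ hmonic hdeg n a (Nat.lt_succ_self _)
  -- c 0 = α
  have hc0 : c 0 = α := by
    show a %ₘ φ = α
    rw [hab, Polynomial.add_modByMonic, (Polynomial.modByMonic_eq_self_iff hmonic).2 hα,
      (Polynomial.modByMonic_eq_zero_iff_dvd hmonic).2 (Dvd.intro_left β rfl), add_zero]
  have h0mem : (0 : ℕ) ∈ Finset.range n := Finset.mem_range.2 (Nat.succ_pos _)
  -- u a = inf of terms
  have hinf : u a = (Finset.range n).inf fun i => u (c i * φ ^ i) := hself a n c hc hrep
  have hua_le : u a ≤ u α := by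
    have := Finset.inf_le (f := fun i => u (c i * φ ^ i)) h0mem
    rw [← hinf] at this
    simpa [hc0] using this
  have habs : a - β * φ = α := by rw [hab]; ring
  -- u α ≤ u (β * φ)
  have hC : u α ≤ u (β * φ) := by
    by_contra hlt
    push_neg at hlt
    refine hnd ⟨β, Or.inl ?_⟩
    have hge : min (u α) (u (β * φ)) ≤ u a := by
      have := u.map_add α (β * φ)
      rwa [← hab] at this
    have hmin : min (u a) (u (β * φ)) ≤ u (β * φ) := min_le_right _ _
    calc min (u a) (u (β * φ)) ≤ u (β * φ) := hmin
      _ < u α := hlt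
      _ = u (a - β * φ) := by rw [habs]
  have hu_eq : u a = u α := by
    refine le_antisymm hua_le ?_
    have := u.map_add α (β * φ)
    rw [← hab] at this
    exact le_trans (le_min le_rfl hC) this
  -- u α ≠ ⊤
  have huα_ne : u α ≠ ⊤ := by
    intro htop
    refine hnd ⟨0, Or.inr ⟨by rw [hu_eq, htop], ?_⟩⟩
    rw [zero_mul]
    exact u.map_zero
  have huα_lt_top : u α < ⊤ := lt_top_iff_ne_top.2 huα_ne
  -- value of the terms under u
  have hterm : ∀ i, u (c i * φ ^ i) = u (c i) + i • u φ := by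
    intro i; rw [u.map_mul, u.map_pow]
  have hterm_le : ∀ i ∈ Finset.range n, u α ≤ u (c i) + i • μ := by
    intro i hi
    have h1 : u a ≤ u (c i * φ ^ i) := by
      rw [hinf]; exact Finset.inf_le hi
    have h2 : u (c i) + i • u φ ≤ u (c i) + i • μ :=
      add_le_add_right (nsmul_le_nsmul_right hμ.le i) _
    calc u α = u a := hu_eq.symm
      _ ≤ u (c i * φ ^ i) := h1
      _ = u (c i) + i • u φ := hterm i
      _ ≤ u (c i) + i • μ := h2
  have hterm_lt : ∀ i ∈ Finset.range n, i ≠ 0 → u α < u (c i) + i • μ := by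
    intro i hi hi0
    by_cases htop : u (c i) = ⊤
    · rw [htop, top_add]; exact huα_lt_top
    · have h1 : u a ≤ u (c i * φ ^ i) := by
        rw [hinf]; exact Finset.inf_le hi
      have huφ_ne : u φ ≠ ⊤ := ne_top_of_lt hμ
      have h2 : i • u φ < i • μ := nsmul_lt_nsmul_of_ne_top huφ_ne hμ hi0
      have h3 : u (c i) + i • u φ < u (c i) + i • μ := WithTop.add_lt_add_left htop h2
      calc u α = u a := hu_eq.symm
        _ ≤ u (c i) + i • u φ := by rw [← hterm i]; exact h1
        _ < u (c i) + i • μ := h3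
  -- w α = u α
  have hwα : w α = u α := by
    have := haug.2 α 1 (fun _ => α) (fun _ => hα) (by simp)
    rw [this, Finset.range_one, Finset.inf_singleton, zero_nsmul, add_zero]
  -- w a = u α
  have hwa : w a = u α := by
    have heq := haug.2 a n c hc hrep
    rw [heq]
    refine le_antisymm ?_ (Finset.le_inf hterm_le)
    have := Finset.inf_le (f := fun i => u (c i) + i • μ) h0mem
    simpa [hc0, zero_nsmul] using this
  -- the expansion of β * φ
  set c' : ℕ → Polynomial K := fun i => if i = 0 then 0 else c i with hc'_def
  have hc' : ∀ i, (c' i).degree < φ.degree := by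
    intro i
    by_cases h : i = 0
    · simpa [hc'_def, h] using lt_of_le_of_lt (by simp) hdeg
    · simpa [hc'_def, h] using hc i
  have hrep' : β * φ = ∑ i ∈ Finset.range n, c' i * φ ^ i := by
    have h1 : ∑ i ∈ Finset.range n, c i * φ ^ i
        = c 0 * φ ^ 0 + ∑ i ∈ (Finset.range n).erase 0, c i * φ ^ i :=
      (Finset.add_sum_erase _ _ h0mem).symm
    have h2 : ∑ i ∈ Finset.range n, c' i * φ ^ i
        = c' 0 * φ ^ 0 + ∑ i ∈ (Finset.range n).erase 0, c' i * φ ^ i :=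
      (Finset.add_sum_erase _ _ h0mem).symm
    have h3 : ∑ i ∈ (Finset.range n).erase 0, c' i * φ ^ i
        = ∑ i ∈ (Finset.range n).erase 0, c i * φ ^ i := by
      refine Finset.sum_congr rfl fun i hi => ?_
      have : i ≠ 0 := (Finset.mem_erase.1 hi).1
      simp [hc'_def, this]
    have h4 : β * φ = a - α := by rw [hab]; ring
    rw [h4, hrep, h1, h2, h3, hc0]
    simp [hc'_def]
  have hwβφ : u α < w (β * φ) := by
    have heq := haug.2 (β * φ) n c' hc' hrep'
    rw [heq]
    rw [Finset.lt_inf_iff huα_lt_top]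
    intro i hi
    by_cases h : i = 0
    · subst h
      simp only [hc'_def, if_pos rfl]
      rw [u.map_zero, top_add]
      exact huα_lt_top
    · simp only [hc'_def, if_neg h]
      exact hterm_lt i hi h
  refine ⟨hu_eq, Or.inl ?_⟩
  have hsub : a - α = β * φ := by rw [hab]; ring
  rw [hwa, hwα, min_self, hsub]
  exact hwβφ
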